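/- In P_{n+1}, for all 1 ≤ i < j < k ≤ n and all α ∈ ℤ, the following three pairs of elements commute: (1) u_{ij}(N,−α)^{−1} X_{0i} commutes with x_{jk}(α); (2) u_{ik}(α,−N) X_{0k} commutes with x_{ij}(α); (3) u_{ij}(α+1,−N) X_{0j} commutes with x_{ik}(α). -/
import Mathlib


/-- The braid relations on `n` generators `σ_0, …, σ_{n−1}`:
`σ_i σ_j = σ_j σ_i` for `|i−j| ≥ 2` and `σ_i σ_{i+1} σ_i = σ_{i+1} σ_i σ_{i+1}`. -/
def braidRels (n : ℕ) : Set (FreeGroup (Fin n)) :=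
  { r | (∃ i j : Fin n, (i : ℕ) + 2 ≤ (j : ℕ) ∧
          r = FreeGroup.of i * FreeGroup.of j * (FreeGroup.of i)⁻¹ * (FreeGroup.of j)⁻¹) ∨
        (∃ i j : Fin n, (i : ℕ) + 1 = (j : ℕ) ∧
          r = FreeGroup.of i * FreeGroup.of j * FreeGroup.of i *
              (FreeGroup.of j * FreeGroup.of i * FreeGroup.of j)⁻¹) }

/-- The braid group `B_{n+1}` on `n+1` strands, presented by `n` generators
`σ_0, …, σ_{n−1}` and the braid relations. -/
abbrev Braid (n : ℕ) := PresentedGroup (braidRels n)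

/-- The generator `σ_k` of `B_{n+1}` (junk value `1` if `k ≥ n`). -/
def gen (n k : ℕ) : Braid n :=
  if h : k < n then PresentedGroup.of (⟨k, h⟩ : Fin n) else 1

/-- The product `σ_{j−1} σ_{j−2} ⋯ σ_{i+1}`. -/
def chain (n i j : ℕ) : Braid n :=
  ((List.range (j - 1 - i)).map (fun k => gen n (j - 1 - k))).prod

/-- The Artin generator `x_{ij} = (σ_{j−1}⋯σ_{i+1}) σ_i² (σ_{j−1}⋯σ_{i+1})⁻¹`
of the pure braid group `P_{n+1}`. -/
def artin (n i j : ℕ) : Braid n :=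
  chain n i j * (gen n i) ^ 2 * (chain n i j)⁻¹

/-- For `β ≥ 0`, `pik x α β = x(α) x(α+1) ⋯ x(α+β−1)` (empty product being `1`);
for `β < 0`, `pik x α β = x(α−1)⁻¹ x(α−2)⁻¹ ⋯ x(α+β)⁻¹`. -/
def pik {G : Type*} [Group G] (x : ℤ → G) (α β : ℤ) : G :=
  if 0 ≤ β then ((List.range β.toNat).map (fun k => x (α + k))).prod
  else (((List.range (-β).toNat).map (fun k => x (α + β + k))).prod)⁻¹

/-- `u(α,β) = π(α,β) · π(0,β)⁻¹`. -/
def uu {G : Type*} [Group G] (x : ℤ → G) (α β : ℤ) : G :=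
  pik x α β * (pik x 0 β)⁻¹

/-- `x_{ij}(α) = x_{0i}^α x_{ij} x_{0i}^{−α}`. -/
def xg (n i j : ℕ) (α : ℤ) : Braid n :=
  artin n 0 i ^ α * artin n i j * artin n 0 i ^ (-α)

/-- `x_{ij}(α+β|α) = π_{ij}(α,β) · x_{ij}(α+β) · π_{ij}(α,β)⁻¹`. -/
def xconj (n i j : ℕ) (α β : ℤ) : Braid n :=
  pik (xg n i j) α β * xg n i j (α + β) * (pik (xg n i j) α β)⁻¹

/-- `X_{0i} = x_{0i}^N`. -/
def XX (n N i : ℕ) : Braid n := artin n 0 i ^ N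

lemma rel_eq_one {n : ℕ} {r : FreeGroup (Fin n)} (hr : r ∈ braidRels n) :
    PresentedGroup.mk (braidRels n) r = 1 :=
  (QuotientGroup.eq_one_iff r).mpr (Subgroup.subset_normalClosure hr)

lemma gen_comm {n a b : ℕ} (h : a + 2 ≤ b) : Commute (gen n a) (gen n b) := by
  by_cases hb : b < n
  · have ha : a < n := by omega
    have hr : (FreeGroup.of (⟨a, ha⟩ : Fin n) * FreeGroup.of (⟨b, hb⟩ : Fin n) *
        (FreeGroup.of (⟨a, ha⟩ : Fin n))⁻¹ * (FreeGroup.of (⟨b, hb⟩ : Fin n))⁻¹) ∈ braidRels n :=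
      Or.inl ⟨⟨a, ha⟩, ⟨b, hb⟩, h, rfl⟩
    have h1 := rel_eq_one hr
    rw [map_mul, map_mul, map_inv, map_inv] at h1
    have h2 : PresentedGroup.of (rels := braidRels n) (⟨a, ha⟩ : Fin n) *
        PresentedGroup.of (⟨b, hb⟩ : Fin n) * (PresentedGroup.of (⟨a, ha⟩ : Fin n))⁻¹ *
        (PresentedGroup.of (⟨b, hb⟩ : Fin n))⁻¹ = 1 := h1
    have h3 := commutatorElement_eq_one_iff_commute.mp h2
    simp only [gen, dif_pos ha, dif_pos hb]
    exact h3
  · simp only [gen, dif_neg hb]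
    exact Commute.one_right _

lemma gen_braid {n a : ℕ} (h : a + 2 ≤ n) :
    gen n a * gen n (a+1) * gen n a = gen n (a+1) * gen n a * gen n (a+1) := by
  have ha : a < n := by omega
  have hb : a + 1 < n := by omega
  have hr : (FreeGroup.of (⟨a, ha⟩ : Fin n) * FreeGroup.of (⟨a+1, hb⟩ : Fin n) *
      FreeGroup.of (⟨a, ha⟩ : Fin n) * (FreeGroup.of (⟨a+1, hb⟩ : Fin n) *
      FreeGroup.of (⟨a, ha⟩ : Fin n) * FreeGroup.of (⟨a+1, hb⟩ : Fin n))⁻¹) ∈ braidRels n :=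
    Or.inr ⟨⟨a, ha⟩, ⟨a+1, hb⟩, rfl, rfl⟩
  have h1 := rel_eq_one hr
  rw [map_mul, map_mul, map_inv, map_mul, map_mul] at h1
  simp only [gen, dif_pos ha, dif_pos hb]
  exact mul_inv_eq_one.mp h1

lemma chain_eq_one {n i j : ℕ} (h : j ≤ i + 1) : chain n i j = 1 := by
  unfold chain
  have : j - 1 - i = 0 := by omega
  rw [this]
  simp

lemma chain_succ {n i j : ℕ} (h : i + 1 ≤ j) :
    chain n i (j+1) = gen n j * chain n i j := by
  unfold chain
  have h1 : j + 1 - 1 - i = (j - 1 - i) + 1 := by omega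
  rw [h1, List.range_succ_eq_map, List.map_cons, List.prod_cons, List.map_map]
  have hf : ((fun k => gen n (j + 1 - 1 - k)) ∘ Nat.succ) = (fun k => gen n (j - 1 - k)) := by
    funext k
    show gen n (j + 1 - 1 - (k+1)) = gen n (j - 1 - k)
    congr 1
    omega
  rw [hf]
  congr 2

lemma chain_split {n k j : ℕ} (h : k + 2 ≤ j) :
    chain n k j = chain n (k+1) j * gen n (k+1) := by
  unfold chain
  have h1 : j - 1 - k = (j - 1 - (k+1)) + 1 := by omega
  rw [h1, List.range_succ, List.map_append, List.prod_append]
  congr 1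
  simp only [List.map_cons, List.map_nil, List.prod_cons, List.prod_nil, mul_one]
  congr 1
  omega

-- commute with chain via letters
lemma commute_chain {n i j : ℕ} {g : Braid n}
    (hg : ∀ m, i + 1 ≤ m → m + 1 ≤ j → Commute g (gen n m)) :
    Commute g (chain n i j) := by
  unfold chain
  apply Commute.list_prod_right
  intro x hx
  simp only [List.mem_map, List.mem_range] at hx
  obtain ⟨k, hk, rfl⟩ := hx
  exact hg _ (by omega) (by omega)

lemma artin_base {n i : ℕ} : artin n i (i+1) = gen n i ^ 2 := by
  unfold artin
  rw [chain_eq_one (le_refl _)]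
  group

lemma artin_succ {n i j : ℕ} (h : i + 1 ≤ j) :
    artin n i (j+1) = gen n j * artin n i j * (gen n j)⁻¹ := by
  unfold artin
  rw [chain_succ h]
  group

/-- CH: the chain conjugates σ_{t+1} to σ_t. -/
lemma chain_conj {n i t : ℕ} : ∀ {j : ℕ}, i + 1 ≤ t → t + 2 ≤ j → j ≤ n →
    chain n i j * gen n (t+1) * (chain n i j)⁻¹ = gen n t := by
  intro j
  induction j with
  | zero => intro _ h2 _; omega
  | succ j ih =>
    intro h1 h2 hn
    by_cases hj : t + 2 ≤ j
    · -- step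
      rw [chain_succ (by omega : i + 1 ≤ j)]
      have hIH := ih h1 hj (by omega)
      have hc : Commute (gen n t) (gen n j) := gen_comm (by omega)
      calc gen n j * chain n i j * gen n (t+1) * (gen n j * chain n i j)⁻¹
          = gen n j * (chain n i j * gen n (t+1) * (chain n i j)⁻¹) * (gen n j)⁻¹ := by group
        _ = gen n j * gen n t * (gen n j)⁻¹ := by rw [hIH]
        _ = gen n t * gen n j * (gen n j)⁻¹ := by rw [← hc.eq]
        _ = gen n t := by group
    · -- base: j + 1 = t + 2, so j = t + 1
      have hjt : j = t + 1 := by omega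
      subst hjt
      rw [chain_succ (by omega : i + 1 ≤ t + 1), chain_succ (by omega : i + 1 ≤ t)]
      have hcc : Commute (gen n (t+1)) (chain n i t) :=
        commute_chain (fun m hm1 hm2 => (gen_comm (by omega)).symm)
      have hb : gen n t * gen n (t+1) * gen n t = gen n (t+1) * gen n t * gen n (t+1) :=
        gen_braid (by omega)
      calc gen n (t+1) * (gen n t * chain n i t) * gen n (t+1) *
              (gen n (t+1) * (gen n t * chain n i t))⁻¹
          = gen n (t+1) * gen n t * (chain n i t * gen n (t+1) * (chain n i t)⁻¹) *
              (gen n t)⁻¹ * (gen n (t+1))⁻¹ := by group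
        _ = gen n (t+1) * gen n t * (gen n (t+1) * chain n i t * (chain n i t)⁻¹) *
              (gen n t)⁻¹ * (gen n (t+1))⁻¹ := by rw [hcc.eq]
        _ = gen n (t+1) * gen n t * gen n (t+1) * (gen n t)⁻¹ * (gen n (t+1))⁻¹ := by group
        _ = gen n t * gen n (t+1) * gen n t * (gen n t)⁻¹ * (gen n (t+1))⁻¹ := by rw [← hb]
        _ = gen n t := by group

lemma braid_conj_sq {G : Type*} [Group G] {s t : G} (hb : s*t*s = t*s*t) :
    s * (t*(s*s)*t⁻¹) * s⁻¹ = t*t := by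
  have h6 : s*t*s*s = t*t*s*t := by
    calc s*t*s*s = (s*t*s)*s := by group
      _ = (t*s*t)*s := by rw [hb]
      _ = t*(s*t*s) := by group
      _ = t*(t*s*t) := by rw [hb]
      _ = t*t*s*t := by group
  calc s*(t*(s*s)*t⁻¹)*s⁻¹ = (s*t*s*s)*(t⁻¹*s⁻¹) := by group
    _ = (t*t*s*t)*(t⁻¹*s⁻¹) := by rw [h6]
    _ = t*t := by group

/-- S1: σ_k conjugates x_{k,j} to x_{k+1,j}. -/
lemma artin_shift {n k j : ℕ} (h : k + 2 ≤ j) (hn : j ≤ n) :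
    gen n k * artin n k j * (gen n k)⁻¹ = artin n (k+1) j := by
  have hsplit : chain n k j = chain n (k+1) j * gen n (k+1) := chain_split h
  have hcc : Commute (gen n k) (chain n (k+1) j) :=
    commute_chain (fun m hm1 hm2 => gen_comm (by omega))
  have hb : gen n k * gen n (k+1) * gen n k = gen n (k+1) * gen n k * gen n (k+1) :=
    gen_braid (by omega)
  unfold artin
  rw [hsplit]
  set s := gen n k
  set t := gen n (k+1)
  set C := chain n (k+1) j
  have h1 : Commute s C := hcc
  have h2 : Commute s C⁻¹ := hcc.inv_right
  calc s * (C * t * s^2 * (C*t)⁻¹) * s⁻¹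
      = (s*C) * (t*(s*s)*t⁻¹) * (C⁻¹*s⁻¹) := by rw [pow_two]; group
    _ = (C*s) * (t*(s*s)*t⁻¹) * (C⁻¹*s⁻¹) := by rw [h1.eq]
    _ = (C*s) * (t*(s*s)*t⁻¹) * (s⁻¹*C⁻¹) := by rw [(h2.inv_left).eq]
    _ = C * (s * (t*(s*s)*t⁻¹) * s⁻¹) * C⁻¹ := by group
    _ = C * (t*t) * C⁻¹ := by rw [braid_conj_sq hb]
    _ = C * t^2 * C⁻¹ := by rw [pow_two]

/-- G1 low: σ_t commutes with x_{ij} when t+2 ≤ i. -/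
lemma gen_artin_low {n t i j : ℕ} (h : t + 2 ≤ i) : Commute (gen n t) (artin n i j) := by
  unfold artin
  have hc : Commute (gen n t) (chain n i j) :=
    commute_chain (fun m hm1 hm2 => gen_comm (by omega))
  exact (hc.mul_right ((gen_comm h).pow_right 2)).mul_right hc.inv_right

/-- G1 high: σ_t commutes with x_{ij} when j+1 ≤ t and i < j. -/
lemma gen_artin_high {n t i j : ℕ} (hij : i < j) (h : j + 1 ≤ t) :
    Commute (gen n t) (artin n i j) := by
  unfold artin
  have hc : Commute (gen n t) (chain n i j) :=
    commute_chain (fun m hm1 hm2 => (gen_comm (by omega)).symm)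
  exact (hc.mul_right (((gen_comm (show i + 2 ≤ t by omega)).symm).pow_right 2)).mul_right
    hc.inv_right

/-- G1 inner: σ_t commutes with x_{ij} when i+1 ≤ t and t+2 ≤ j ≤ n. -/
lemma gen_artin_inner {n t i j : ℕ} (h1 : i + 1 ≤ t) (h2 : t + 2 ≤ j) (hn : j ≤ n) :
    Commute (gen n t) (artin n i j) := by
  have hch : chain n i j * gen n (t+1) * (chain n i j)⁻¹ = gen n t :=
    chain_conj h1 h2 hn
  have hcomm : Commute (gen n (t+1)) (gen n i ^ 2) :=
    ((gen_comm (show i + 2 ≤ t + 1 by omega)).symm).pow_right 2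
  show gen n t * artin n i j = artin n i j * gen n t
  unfold artin
  set c := chain n i j
  set g := gen n i ^ 2
  have h3 : gen n t * c = c * gen n (t+1) := by
    rw [← hch]; group
  have h4 : gen n (t+1) * c⁻¹ = c⁻¹ * gen n t := by
    rw [← hch]; group
  calc gen n t * (c * g * c⁻¹) = (gen n t * c) * g * c⁻¹ := by group
    _ = (c * gen n (t+1)) * g * c⁻¹ := by rw [h3]
    _ = c * (gen n (t+1) * g) * c⁻¹ := by group
    _ = c * (g * gen n (t+1)) * c⁻¹ := by rw [hcomm.eq]
    _ = c * g * (gen n (t+1) * c⁻¹) := by group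
    _ = c * g * (c⁻¹ * gen n t) := by rw [h4]
    _ = c * g * c⁻¹ * gen n t := by group

/-- Helper: commute with an artin generator from commuting with its letters. -/
lemma commute_artin {n i j : ℕ} {g : Braid n}
    (hg : ∀ t, i ≤ t → t + 1 ≤ j → Commute g (gen n t)) (hij : i < j) :
    Commute g (artin n i j) := by
  unfold artin
  have hc : Commute g (chain n i j) :=
    commute_chain (fun m hm1 hm2 => hg m (by omega) hm2)
  exact (hc.mul_right ((hg i (le_refl _) hij).pow_right 2)).mul_right hc.inv_right

/-- F1: disjoint commuting. -/
lemma artin_comm_disjoint {n a b c d : ℕ} (hab : a < b) (hbc : b < c) (hcd : c < d) :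
    Commute (artin n a b) (artin n c d) := by
  refine commute_artin (fun t ht1 ht2 => ?_) hcd
  exact (gen_artin_high hab (by omega)).symm

/-- F2: nested commuting. -/
lemma artin_comm_nested {n a b c d : ℕ} (hab : a < b) (hbc : b < c) (hcd : c < d)
    (hn : d ≤ n) : Commute (artin n a d) (artin n b c) := by
  refine commute_artin (fun t ht1 ht2 => ?_) hbc
  exact (gen_artin_inner (by omega) (by omega) hn).symm

section BraidWords
variable {G : Type*} [Group G] {s t u : G}

lemma braid_six (h : s*t*s = t*s*t) : s*t*s*t*s*t = t*s*t*s*t*s := by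
  calc s*t*s*t*s*t = (s*t*s)*(t*s*t) := by group
    _ = (t*s*t)*(s*t*s) := by rw [h]
    _ = t*s*t*s*t*s := by group

lemma braid_w1 (h : s*t*s = t*s*t) : s*s*t*s*s*t = s*t*s*t*s*t := by
  calc s*s*t*s*s*t = s*(s*t*s)*(s*t) := by group
    _ = s*(t*s*t)*(s*t) := by rw [h]
    _ = s*t*s*t*s*t := by group

lemma braid_w2 (h : s*t*s = t*s*t) : t*s*s*t*s*s = t*s*t*s*t*s := by
  calc t*s*s*t*s*s = t*s*(s*t*s)*s := by group
    _ = t*s*(t*s*t)*s := by rw [h]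
    _ = t*s*t*s*t*s := by group

lemma braid_e_a (h : s*t*s = t*s*t) :
    (s*s) * (t*(s*s)*t⁻¹) * (t*t) = s*t*s*t*s*t := by
  calc (s*s) * (t*(s*s)*t⁻¹) * (t*t) = s*s*t*s*s*t := by group
    _ = s*t*s*t*s*t := braid_w1 h

lemma braid_e_b (h : s*t*s = t*s*t) :
    (t*(s*s)*t⁻¹) * (t*t) * (s*s) = s*t*s*t*s*t := by
  calc (t*(s*s)*t⁻¹) * (t*t) * (s*s) = t*s*s*t*s*s := by group
    _ = t*s*t*s*t*s := braid_w2 h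
    _ = s*t*s*t*s*t := (braid_six h).symm

lemma braid_e_c (h : s*t*s = t*s*t) :
    (t*t) * (s*s) * (t*(s*s)*t⁻¹) = s*t*s*t*s*t := by
  have hc : ((t*t) * (s*s) * (t*(s*s)*t⁻¹)) * t = (s*t*s*t*s*t) * t := by
    calc ((t*t) * (s*s) * (t*(s*s)*t⁻¹)) * t = t*(t*s*s*t*s*s) := by group
      _ = t*(t*s*t*s*t*s) := by rw [braid_w2 h]
      _ = t*(s*t*s*t*s*t) := by rw [← braid_six h]
      _ = (t*s*t*s*t*s)*t := by group
      _ = (s*t*s*t*s*t)*t := by rw [braid_six h]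
  exact mul_right_cancel hc

lemma braid_conj_eq (h : s*t*s = t*s*t) :
    (s*s) * (t*(s*s)*t⁻¹) * (s*s)⁻¹ = t⁻¹*(s*s)*t := by
  have key : t*s*s*t*s*s = s*s*t*s*s*t := by
    rw [braid_w2 h, braid_w1 h, braid_six h]
  have hc : t * ((s*s) * (t*(s*s)*t⁻¹) * (s*s)⁻¹) * ((s*s)*t) =
      t * (t⁻¹*(s*s)*t) * ((s*s)*t) := by
    calc t * ((s*s) * (t*(s*s)*t⁻¹) * (s*s)⁻¹) * ((s*s)*t) = t*s*s*t*s*s := by group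
      _ = s*s*t*s*s*t := key
      _ = t * (t⁻¹*(s*s)*t) * ((s*s)*t) := by group
  exact mul_left_cancel (mul_right_cancel hc)

lemma braid_conj_sq' (h : t*u*t = u*t*u) : u*(t*t)*u⁻¹ = t⁻¹*(u*u)*t := by
  have hc : t * (u*(t*t)*u⁻¹) * u = t * (t⁻¹*(u*u)*t) * u := by
    calc t * (u*(t*t)*u⁻¹) * u = (t*u*t)*t := by group
      _ = (u*t*u)*t := by rw [h]
      _ = u*(t*u*t) := by group
      _ = u*(u*t*u) := by rw [h]
      _ = t * (t⁻¹*(u*u)*t) * u := by group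
  exact mul_left_cancel (mul_right_cancel hc)

end BraidWords

section ConjHelpers
variable {G : Type*} [Group G]

lemma conj_eq_cancel (g : G) {X Y : G} (h : g*X*g⁻¹ = g*Y*g⁻¹) : X = Y := by
  have := mul_right_cancel h
  exact mul_left_cancel this

lemma conj_of_commute {g Y : G} (h : Commute g Y) : g*Y*g⁻¹ = Y := by
  rw [h.eq]; group

lemma commute_conj (g : G) {X Y : G} (h : Commute X Y) :
    Commute (g*X*g⁻¹) (g*Y*g⁻¹) := by
  have : ∀ U V : G, (g*U*g⁻¹)*(g*V*g⁻¹) = g*(U*V)*g⁻¹ := by intros; group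
  show _ = _
  rw [this, this, h.eq]

lemma commute_conj_inv (g : G) {X Y : G} (h : Commute X Y) :
    Commute (g⁻¹*X*g) (g⁻¹*Y*g) := by
  have := commute_conj g⁻¹ h
  rwa [inv_inv] at this

lemma conj_commute_cancel (g : G) {X Y : G} (h : Commute (g*X*g⁻¹) (g*Y*g⁻¹)) :
    Commute X Y := by
  have h2 := commute_conj g⁻¹ h
  have e : ∀ U : G, g⁻¹*(g*U*g⁻¹)*g⁻¹⁻¹ = U := by intros; group
  rwa [e, e] at h2

lemma conj3 (g : G) {X Y Z X' Y' Z' : G} (hX : g*X*g⁻¹ = X') (hY : g*Y*g⁻¹ = Y')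
    (hZ : g*Z*g⁻¹ = Z') (h : X'*Y'*Z' = Y'*Z'*X' ∧ X'*Y'*Z' = Z'*X'*Y') :
    X*Y*Z = Y*Z*X ∧ X*Y*Z = Z*X*Y := by
  have e : ∀ U V W : G, g*(U*V*W)*g⁻¹ = (g*U*g⁻¹)*(g*V*g⁻¹)*(g*W*g⁻¹) := by intros; group
  refine ⟨conj_eq_cancel g ?_, conj_eq_cancel g ?_⟩
  · rw [e, e, hX, hY, hZ]; exact h.1
  · rw [e, e, hX, hY, hZ]; exact h.2

lemma conj_swap {g X Y : G} (h : Commute g X) :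
    X*(g*Y*g⁻¹)*X⁻¹ = g*(X*Y*X⁻¹)*g⁻¹ := by
  have h2 : g⁻¹*X⁻¹ = X⁻¹*g⁻¹ := (h.inv_left.inv_right).eq
  calc X*(g*Y*g⁻¹)*X⁻¹ = (X*g)*Y*(g⁻¹*X⁻¹) := by group
    _ = (g*X)*Y*(g⁻¹*X⁻¹) := by rw [h.eq]
    _ = (g*X)*Y*(X⁻¹*g⁻¹) := by rw [h2]
    _ = g*(X*Y*X⁻¹)*g⁻¹ := by group

lemma conj_swap2 {g X Y : G} (h : Commute g Y) :
    (g*X*g⁻¹)*Y*(g*X*g⁻¹)⁻¹ = g*(X*Y*X⁻¹)*g⁻¹ := by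
  have h3 : g⁻¹*Y = Y*g⁻¹ := h.inv_left.eq
  calc (g*X*g⁻¹)*Y*(g*X*g⁻¹)⁻¹ = g*X*(g⁻¹*Y)*g*X⁻¹*g⁻¹ := by group
    _ = g*X*(Y*g⁻¹)*g*X⁻¹*g⁻¹ := by rw [h3]
    _ = g*(X*Y*X⁻¹)*g⁻¹ := by group

lemma conj_swap3 (g X Y : G) :
    (g*X*g⁻¹)*(g*Y*g⁻¹)*(g*X*g⁻¹)⁻¹ = g*(X*Y*X⁻¹)*g⁻¹ := by group

end ConjHelpers

lemma artin_two {n a : ℕ} : artin n a (a+2) = gen n (a+1) * gen n a ^ 2 * (gen n (a+1))⁻¹ := by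
  rw [show a + 2 = (a+1) + 1 from rfl, artin_succ (le_refl _), artin_base]

lemma F3base {n a : ℕ} (h : a + 2 ≤ n) :
    (artin n a (a+1) * artin n a (a+2) * artin n (a+1) (a+2) =
      artin n a (a+2) * artin n (a+1) (a+2) * artin n a (a+1) ∧
     artin n a (a+1) * artin n a (a+2) * artin n (a+1) (a+2) =
      artin n (a+1) (a+2) * artin n a (a+1) * artin n a (a+2)) := by
  have hb : gen n a * gen n (a+1) * gen n a = gen n (a+1) * gen n a * gen n (a+1) :=
    gen_braid h
  rw [artin_two, artin_base, artin_base, pow_two, pow_two]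
  exact ⟨(braid_e_a hb).trans (braid_e_b hb).symm,
         (braid_e_a hb).trans (braid_e_c hb).symm⟩

lemma F3aux {n : ℕ} : ∀ m : ℕ, ∀ a b c : ℕ, a < b → b < c → c ≤ n →
    2*(c-b) + (b-a) ≤ m + 3 →
    (artin n a b * artin n a c * artin n b c = artin n a c * artin n b c * artin n a b ∧
     artin n a b * artin n a c * artin n b c = artin n b c * artin n a b * artin n a c) := by
  intro m
  induction m with
  | zero =>
    intro a b c h1 h2 h3 hm
    have hb : b = a + 1 := by omega
    have hc : c = a + 2 := by omega
    subst hb; subst hc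
    exact F3base h3
  | succ m ih =>
    intro a b c h1 h2 h3 hm
    by_cases hbc : b + 1 < c
    · have hP := ih a (b+1) c (by omega) (by omega) h3 (by omega)
      exact conj3 (gen n b)
        (artin_succ (by omega : a + 1 ≤ b)).symm
        (conj_of_commute (gen_artin_inner (by omega) (by omega) h3))
        (artin_shift (by omega) h3) hP
    · by_cases hab : a + 1 < b
      · have hP := ih (a+1) b c (by omega) h2 h3 (by omega)
        exact conj3 (gen n a)
          (artin_shift (by omega) (by omega))
          (artin_shift (by omega) h3)
          (conj_of_commute (gen_artin_low (by omega))) hP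
      · have hb : b = a + 1 := by omega
        have hc : c = a + 2 := by omega
        subst hb; subst hc
        exact F3base h3

lemma F4base {n a : ℕ} (h : a + 3 ≤ n) :
    Commute (artin n a (a+1) * artin n a (a+2) * (artin n a (a+1))⁻¹)
      (artin n (a+1) (a+3)) := by
  have hb1 : gen n a * gen n (a+1) * gen n a = gen n (a+1) * gen n a * gen n (a+1) :=
    gen_braid (by omega)
  have hb2 : gen n (a+1) * gen n (a+2) * gen n (a+1) =
      gen n (a+2) * gen n (a+1) * gen n (a+2) := gen_braid h
  have hsu : Commute (gen n a) (gen n (a+2)) := gen_comm (by omega)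
  have h13 : artin n (a+1) (a+3) = gen n (a+2) * gen n (a+1) ^ 2 * (gen n (a+2))⁻¹ := by
    rw [show a + 3 = (a+2) + 1 from rfl, artin_succ (by omega : a + 1 + 1 ≤ a + 2), artin_base]
  rw [artin_two, artin_base, h13, pow_two, pow_two]
  rw [braid_conj_eq hb1, braid_conj_sq' hb2]
  apply commute_conj_inv
  have h1 : Commute (gen n a) (gen n (a+2) * gen n (a+2)) := hsu.mul_right hsu
  exact h1.mul_left h1

lemma F4aux {n : ℕ} : ∀ m : ℕ, ∀ a b c d : ℕ, a < b → b < c → c < d → d ≤ n →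
    3*(d-c) + 2*(c-b) + (b-a) ≤ m + 6 →
    Commute (artin n a b * artin n a c * (artin n a b)⁻¹) (artin n b d) := by
  intro m
  induction m with
  | zero =>
    intro a b c d h1 h2 h3 h4 hm
    obtain ⟨rfl, rfl, rfl⟩ : b = a + 1 ∧ c = a + 2 ∧ d = a + 3 := by omega
    exact F4base h4
  | succ m ih =>
    intro a b c d h1 h2 h3 h4 hm
    by_cases hcd : c + 1 < d
    · have hQ := ih a b (c+1) d h1 (by omega) hcd h4 (by omega)
      rw [← (artin_succ (by omega : a + 1 ≤ c)).symm] at hQ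
      rw [conj_swap (gen_artin_high h1 (by omega))] at hQ
      rw [show artin n b d = gen n c * artin n b d * (gen n c)⁻¹ from
        (conj_of_commute (gen_artin_inner (by omega) (by omega) h4)).symm] at hQ
      exact conj_commute_cancel _ hQ
    · by_cases hbc : b + 1 < c
      · have hQ := ih a (b+1) c d (by omega) hbc h3 h4 (by omega)
        rw [← (artin_succ (by omega : a + 1 ≤ b)).symm] at hQ
        rw [← artin_shift (by omega : b + 2 ≤ d) h4] at hQ
        rw [conj_swap2 (gen_artin_inner (by omega) (by omega) (by omega))] at hQ
        exact conj_commute_cancel _ hQ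
      · by_cases hab : a + 1 < b
        · have hQ := ih (a+1) b c d hab h2 h3 h4 (by omega)
          rw [← artin_shift (by omega : a + 2 ≤ b) (by omega)] at hQ
          rw [← artin_shift (by omega : a + 2 ≤ c) (by omega)] at hQ
          rw [conj_swap3] at hQ
          rw [show artin n b d = gen n a * artin n b d * (gen n a)⁻¹ from
            (conj_of_commute (gen_artin_low (by omega))).symm] at hQ
          exact conj_commute_cancel _ hQ
        · obtain ⟨rfl, rfl, rfl⟩ : b = a + 1 ∧ c = a + 2 ∧ d = a + 3 := by omega
          exact F4base h4

lemma list_coe_range (m : ℕ) :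
    (do let a ← List.range m; pure ((a:ℤ))) = (List.range m).map (fun a : ℕ => (a:ℤ)) := by
  induction m with
  | zero => rfl
  | succ m ih => rw [List.range_succ]; simp_all [List.flatMap_append]

section PikFormula
variable {G : Type*} [Group G] (x y : G)

lemma pik_pos (α : ℤ) (m : ℕ) :
    ((List.range m).map (fun k : ℕ => x ^ (α + (k:ℤ)) * y * x ^ (-(α + (k:ℤ))))).prod
      = x ^ α * (y * x) ^ (m:ℤ) * x ^ (-(α + (m:ℤ))) := by
  induction m with
  | zero => simp
  | succ m ih =>
    rw [List.range_succ, List.map_append, List.prod_append, ih]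
    simp only [List.map_cons, List.map_nil, List.prod_cons, List.prod_nil, mul_one]
    push_cast
    rw [zpow_add_one]
    group

lemma pik_eq (α β : ℤ) :
    pik (fun a => x ^ a * y * x ^ (-a)) α β = x ^ α * (y * x) ^ β * x ^ (-(α + β)) := by
  unfold pik
  split_ifs with h
  · rw [list_coe_range, List.map_map]
    have h1 := pik_pos x y α β.toNat
    rw [Int.toNat_of_nonneg h] at h1
    exact h1
  · rw [list_coe_range, List.map_map]
    have h1 := pik_pos x y (α + β) (-β).toNat
    rw [Int.toNat_of_nonneg (by omega : (0:ℤ) ≤ -β)] at h1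
    have h2 : ((List.range (-β).toNat).map
        ((fun k : ℤ => x ^ (α + β + k) * y * x ^ (-(α + β + k))) ∘ (fun a : ℕ => (a:ℤ)))).prod
        = x ^ (α+β) * (y * x) ^ (-β) * x ^ (-(α + β + -β)) := h1
    rw [h2]
    group

lemma uu_eq (α β : ℤ) :
    uu (fun a => x ^ a * y * x ^ (-a)) α β
      = x ^ α * (y * x) ^ β * x ^ (-α) * (y * x) ^ (-β) := by
  unfold uu
  rw [pik_eq, pik_eq]
  group

end PikFormula

section Reduce
variable {G : Type*} [Group G] {A B C : G}

lemma z_comm_A (h1 : A*B*C = B*C*A) (h2 : A*B*C = C*A*B) : Commute (A*B*C) A := by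
  show (A*B*C)*A = A*(A*B*C)
  calc (A*B*C)*A = A*(B*C*A) := by group
    _ = A*(A*B*C) := by rw [← h1]

lemma z_comm_B (h1 : A*B*C = B*C*A) (h2 : A*B*C = C*A*B) : Commute (A*B*C) B := by
  show (A*B*C)*B = B*(A*B*C)
  calc (A*B*C)*B = (B*C*A)*B := by rw [h1]
    _ = B*(C*A*B) := by group
    _ = B*(A*B*C) := by rw [← h2]

lemma CA_pow (h1 : A*B*C = B*C*A) (h2 : A*B*C = C*A*B) (m : ℤ) :
    (C*A) ^ m = B ^ (-m) * (A*B*C) ^ m := by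
  have hCA : C*A = B⁻¹ * (A*B*C) := by rw [h1]; group
  have hc : Commute B⁻¹ (A*B*C) := (z_comm_B h1 h2).symm.inv_left
  rw [hCA, hc.mul_zpow, inv_zpow, zpow_neg]

/-- Simplification of `B^α * z^(-e) * A^f * B^(-α) * z^e`. -/
lemma zshuffle (h1 : A*B*C = B*C*A) (h2 : A*B*C = C*A*B) (e f α : ℤ) :
    B ^ α * (A*B*C) ^ (-e) * A ^ f * (B ^ (-α) * (A*B*C) ^ e) = B ^ α * A ^ f * B ^ (-α) := by
  set z := A*B*C with hz
  have hc : Commute (z ^ (-e)) (A ^ f * B ^ (-α)) :=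
    ((z_comm_A h1 h2).zpow_zpow (-e) f).mul_right ((z_comm_B h1 h2).zpow_zpow (-e) (-α))
  calc B ^ α * z ^ (-e) * A ^ f * (B ^ (-α) * z ^ e)
      = B ^ α * (z ^ (-e) * (A ^ f * B ^ (-α))) * z ^ e := by group
    _ = B ^ α * ((A ^ f * B ^ (-α)) * z ^ (-e)) * z ^ e := by rw [hc.eq]
    _ = B ^ α * A ^ f * B ^ (-α) := by group

lemma reduce1 {D : G} (h1 : A*B*C = B*C*A) (h2 : A*B*C = C*A*B) (hAD : Commute A D)
    (N : ℕ) (α : ℤ) :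
    Commute ((A ^ (N:ℤ) * (C*A) ^ (-α) * A ^ (-(N:ℤ)) * (C*A) ^ (-(-α)))⁻¹ * A ^ N)
      (B ^ α * D * B ^ (-α)) := by
  have hE : (A ^ (N:ℤ) * (C*A) ^ (-α) * A ^ (-(N:ℤ)) * (C*A) ^ (-(-α)))⁻¹ * A ^ N
      = B ^ α * A ^ (N:ℤ) * B ^ (-α) := by
    rw [neg_neg, ← zpow_natCast A N]
    have e1 : (A ^ (N:ℤ) * (C*A) ^ (-α) * A ^ (-(N:ℤ)) * (C*A) ^ α)⁻¹ * A ^ (N:ℤ)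
        = (C*A) ^ (-α) * A ^ (N:ℤ) * ((C*A) ^ α) := by group
    rw [e1, CA_pow h1 h2, CA_pow h1 h2, neg_neg]
    exact zshuffle h1 h2 α (N:ℤ) α
  rw [hE]
  have hc : Commute (A ^ (N:ℤ)) D := hAD.zpow_left _
  have := commute_conj (B ^ α) hc
  rwa [← zpow_neg] at this

lemma zshuffle2 (h1 : A*B*C = B*C*A) (h2 : A*B*C = C*A*B) (e f a : ℤ) :
    A ^ a * (B ^ e * (A*B*C) ^ (-e)) * A ^ f * (B ^ (-e) * (A*B*C) ^ e) * B ^ e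
      = A ^ a * B ^ e * A ^ f := by
  calc A ^ a * (B ^ e * (A*B*C) ^ (-e)) * A ^ f * (B ^ (-e) * (A*B*C) ^ e) * B ^ e
      = A ^ a * (B ^ e * (A*B*C) ^ (-e) * A ^ f * (B ^ (-e) * (A*B*C) ^ e)) * B ^ e := by
        group
    _ = A ^ a * (B ^ e * A ^ f * B ^ (-e)) * B ^ e := by rw [zshuffle h1 h2 e f e]
    _ = A ^ a * B ^ e * A ^ f := by group

lemma reduce2 {E : G} (h1 : A*B*C = B*C*A) (h2 : A*B*C = C*A*B) (hBE : Commute B E)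
    (N : ℕ) (α : ℤ) :
    Commute (A ^ α * (C*A) ^ (-(N:ℤ)) * A ^ (-α) * (C*A) ^ (-(-(N:ℤ))) * B ^ N)
      (A ^ α * E * A ^ (-α)) := by
  have hE : A ^ α * (C*A) ^ (-(N:ℤ)) * A ^ (-α) * (C*A) ^ (-(-(N:ℤ))) * B ^ N
      = A ^ α * B ^ (N:ℤ) * A ^ (-α) := by
    rw [neg_neg, ← zpow_natCast B N, CA_pow h1 h2, CA_pow h1 h2, neg_neg]
    exact zshuffle2 h1 h2 (N:ℤ) (-α) α
  rw [hE]
  have hc : Commute (B ^ (N:ℤ)) E := hBE.zpow_left _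
  have := commute_conj (A ^ α) hc
  rwa [← zpow_neg] at this

lemma reduce3 {F : G} (h1 : A*B*C = B*C*A) (h2 : A*B*C = C*A*B)
    (hF : Commute (A*B*A⁻¹) F) (N : ℕ) (α : ℤ) :
    Commute (A ^ (α+1) * (C*A) ^ (-(N:ℤ)) * A ^ (-(α+1)) * (C*A) ^ (-(-(N:ℤ))) * B ^ N)
      (A ^ α * F * A ^ (-α)) := by
  have hE : A ^ (α+1) * (C*A) ^ (-(N:ℤ)) * A ^ (-(α+1)) * (C*A) ^ (-(-(N:ℤ))) * B ^ N
      = A ^ α * (A * B ^ (N:ℤ) * A⁻¹) * A ^ (-α) := by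
    rw [neg_neg, ← zpow_natCast B N, CA_pow h1 h2, CA_pow h1 h2, neg_neg]
    calc A ^ (α+1) * (B ^ (N:ℤ) * (A*B*C) ^ (-(N:ℤ))) * A ^ (-(α+1)) *
            (B ^ (-(N:ℤ)) * (A*B*C) ^ (N:ℤ)) * B ^ (N:ℤ)
        = A ^ (α+1) * B ^ (N:ℤ) * A ^ (-(α+1)) := zshuffle2 h1 h2 (N:ℤ) (-(α+1)) (α+1)
      _ = A ^ α * (A * B ^ (N:ℤ) * A⁻¹) * A ^ (-α) := by group
  rw [hE]
  have hc0 : Commute ((A*B*A⁻¹) ^ (N:ℤ)) F := hF.zpow_left _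
  have hc : Commute (A * B ^ (N:ℤ) * A⁻¹) F := by
    have he : (A*B*A⁻¹) ^ (N:ℤ) = A * B ^ (N:ℤ) * A⁻¹ := by
      rw [conj_zpow]
    rwa [he] at hc0
  have := commute_conj (A ^ α) hc
  rwa [← zpow_neg] at this

end Reduce

lemma artin_F3 {n a b c : ℕ} (h1 : a < b) (h2 : b < c) (h3 : c ≤ n) :
    (artin n a b * artin n a c * artin n b c = artin n a c * artin n b c * artin n a b ∧
     artin n a b * artin n a c * artin n b c = artin n b c * artin n a b * artin n a c) :=
  F3aux (2*(c-b) + (b-a)) a b c h1 h2 h3 (by omega)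

lemma artin_F4 {n a b c d : ℕ} (h1 : a < b) (h2 : b < c) (h3 : c < d) (h4 : d ≤ n) :
    Commute (artin n a b * artin n a c * (artin n a b)⁻¹) (artin n b d) :=
  F4aux (3*(d-c) + 2*(c-b) + (b-a)) a b c d h1 h2 h3 h4 (by omega)

/-- Relations in `P_{n+1}` (stated in `B_{n+1}`, of which `P_{n+1}` is a subgroup):
`u_{ij}(N,−α)⁻¹ X_{0i}` commutes with `x_{jk}(α)`, `u_{ik}(α,−N) X_{0k}` commutes with
`x_{ij}(α)`, and `u_{ij}(α+1,−N) X_{0j}` commutes with `x_{ik}(α)`. -/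
theorem statement_3 (n N : ℕ) (hn : 3 ≤ n) (hN : 1 ≤ N) :
    ∀ i j k : ℕ, 1 ≤ i → i < j → j < k → k ≤ n → ∀ α : ℤ,
      Commute ((uu (xg n i j) (N : ℤ) (-α))⁻¹ * XX n N i) (xg n j k α) ∧
      Commute (uu (xg n i k) α (-(N : ℤ)) * XX n N k) (xg n i j α) ∧
      Commute (uu (xg n i j) (α + 1) (-(N : ℤ)) * XX n N j) (xg n i k α) := by
  intro i j k hi hij hjk hk α
  have h0i : 0 < i := hi
  have hjn : j ≤ n := by omega
  obtain ⟨hI1, hI2⟩ := artin_F3 (n := n) h0i hij hjn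
  obtain ⟨hK1, hK2⟩ := artin_F3 (n := n) h0i (lt_trans hij hjk) hk
  refine ⟨?_, ?_, ?_⟩
  · have e1 : uu (xg n i j) (N:ℤ) (-α) =
        artin n 0 i ^ (N:ℤ) * (artin n i j * artin n 0 i) ^ (-α) *
        artin n 0 i ^ (-(N:ℤ)) * (artin n i j * artin n 0 i) ^ (-(-α)) :=
      uu_eq (artin n 0 i) (artin n i j) (N:ℤ) (-α)
    rw [e1]
    simp only [XX, xg]
    exact reduce1 hI1 hI2 (artin_comm_disjoint h0i hij hjk) N α
  · have e2 : uu (xg n i k) α (-(N:ℤ)) =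
        artin n 0 i ^ α * (artin n i k * artin n 0 i) ^ (-(N:ℤ)) *
        artin n 0 i ^ (-α) * (artin n i k * artin n 0 i) ^ (-(-(N:ℤ))) :=
      uu_eq (artin n 0 i) (artin n i k) α (-(N:ℤ))
    rw [e2]
    simp only [XX, xg]
    exact reduce2 hK1 hK2 (artin_comm_nested h0i hij hjk hk) N α
  · have e3 : uu (xg n i j) (α+1) (-(N:ℤ)) =
        artin n 0 i ^ (α+1) * (artin n i j * artin n 0 i) ^ (-(N:ℤ)) *
        artin n 0 i ^ (-(α+1)) * (artin n i j * artin n 0 i) ^ (-(-(N:ℤ))) :=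
      uu_eq (artin n 0 i) (artin n i j) (α+1) (-(N:ℤ))
    rw [e3]
    simp only [XX, xg]
    exact reduce3 hI1 hI2 (artin_F4 h0i hij hjk hk) N α
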